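/- arXiv:1710.00070 — 2 statements merged into one kernel-verified Lean document; each statement's English description precedes it below -/
import Mathlib

section
/- If p ∈ (ω)^ω is homogeneous for the coloring (ω)^3 = R ∪ ¬R, where R = {x ∈ (ω)^3 : f(μ^x(1)) ≤ μ^x(2)} for some function f : ω → ω, then (p)^3 ⊆ R (homogeneity must be on the R side). -/
open Set

/-- `f : ℕ → ℕ` is ordered: a value `i` can occur only after all `j < i` have occurred. -/
def IsOrderedFn (f : ℕ → ℕ) : Prop :=
  ∀ n i, f n = i → ∀ j < i, ∃ m < n, f m = j

/-- `(ω)^k`: ordered surjections from `ω` onto `k`. -/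
def OmegaPart (k : ℕ) : Set (ℕ → ℕ) :=
  {f | IsOrderedFn f ∧ (∀ n, f n < k) ∧ ∀ i < k, ∃ n, f n = i}

/-- `(ω)^ω`: ordered surjections from `ω` onto `ω` (infinite partitions). -/
def OmegaPartInf : Set (ℕ → ℕ) :=
  {f | IsOrderedFn f ∧ Function.Surjective f}

/-- `(p)^k`: the `k`-coarsenings of `p`. -/
def Coarsenings (p : ℕ → ℕ) (k : ℕ) : Set (ℕ → ℕ) :=
  {q | q ∈ OmegaPart k ∧ ∀ n m, p n = p m → q n = q m}

/-- `(p)^ω`: the infinite coarsenings of `p`. -/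
def CoarseningsInf (p : ℕ → ℕ) : Set (ℕ → ℕ) :=
  {q | q ∈ OmegaPartInf ∧ ∀ n m, p n = p m → q n = q m}

/-- `μ^x(i)`: the least `n` with `x n = i`. -/
noncomputable def mu (x : ℕ → ℕ) (i : ℕ) : ℕ := sInf {n | x n = i}

/-- `x ↾ n` as a finite string. -/
def restrictList (x : ℕ → ℕ) (n : ℕ) : List ℕ := (List.range n).map x

/-- The basic (cylinder) set `[σ]` of functions extending the finite string `σ`. -/
def Cyl (σ : List ℕ) : Set (ℕ → ℕ) := {x | ∀ n < σ.length, x n = σ.getD n 0}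

/-- A finite string is ordered. -/
def ListOrdered (σ : List ℕ) : Prop :=
  ∀ n < σ.length, ∀ j < σ.getD n 0, ∃ m < n, σ.getD m 0 = j

/-- `(ω)^k_fin`: ordered finite strings over `k` in which all `i < k` appear. -/
def OmegaPartFin (k : ℕ) : Set (List ℕ) :=
  {σ | ListOrdered σ ∧ (∀ a ∈ σ, a < k) ∧ ∀ i < k, i ∈ σ}

/-- Composition `σ ∘ τ` of finite strings: `(σ ∘ τ)(n) = σ(τ(n))`. -/
def listComp (σ τ : List ℕ) : List ℕ := τ.map fun n => σ.getD n 0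

/-- `σ'` is a `k`-coarsening of the finite string `τ`. -/
def IsListCoarsening (k : ℕ) (σ' τ : List ℕ) : Prop :=
  σ' ∈ OmegaPartFin k ∧ σ'.length = τ.length ∧
    ∀ n < τ.length, ∀ m < τ.length,
      τ.getD n 0 = τ.getD m 0 → σ'.getD n 0 = σ'.getD m 0

/-- The open set coded by a set `W` of finite strings. -/
def OpenFrom (W : Set (List ℕ)) : Set (ℕ → ℕ) := {x | ∃ σ ∈ W, x ∈ Cyl σ}

/-- Codes for partial recursive functionals with an oracle. -/
inductive OracleCode : Type
  | oracle : OracleCode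
  | zero : OracleCode
  | succ : OracleCode
  | left : OracleCode
  | right : OracleCode
  | pair : OracleCode → OracleCode → OracleCode
  | comp : OracleCode → OracleCode → OracleCode
  | prec : OracleCode → OracleCode → OracleCode
  | rfind' : OracleCode → OracleCode

/-- Evaluation of an oracle code with oracle `g`. -/
def OracleCode.evalo (g : ℕ →. ℕ) : OracleCode → ℕ →. ℕ
  | .oracle => g
  | .zero => fun _ => Part.some 0
  | .succ => fun n => Part.some (n + 1)
  | .left => fun n => Part.some (Nat.unpair n).1
  | .right => fun n => Part.some (Nat.unpair n).2
  | .pair cf cg => fun n => Nat.pair <$> OracleCode.evalo g cf n <*> OracleCode.evalo g cg n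
  | .comp cf cg => fun n => OracleCode.evalo g cg n >>= OracleCode.evalo g cf
  | .prec cf cg =>
      Nat.unpaired fun a n =>
        n.rec (OracleCode.evalo g cf a) fun y IH => do
          let i ← IH
          OracleCode.evalo g cg (Nat.pair a (Nat.pair y i))
  | .rfind' cf =>
      Nat.unpaired fun a m =>
        (Nat.rfind fun n =>
            (fun x => decide (x = 0)) <$> OracleCode.evalo g cf (Nat.pair a (n + m))).map (· + m)

/-- View a total function as a partial function. -/
def toP (f : ℕ → ℕ) : ℕ →. ℕ := fun n => Part.some (f n)

/-- `f` is Turing reducible to `g`. -/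
def TuringReducibleFun (f g : ℕ → ℕ) : Prop :=
  ∃ c : OracleCode, c.evalo (toP g) = toP f

open Classical in
/-- Characteristic function of a set of naturals. -/
noncomputable def chi (A : Set ℕ) : ℕ → ℕ := fun n => if n ∈ A then 1 else 0

/-- A numbering of oracle codes. -/
def OracleCode.encodeC : OracleCode → ℕ
  | .oracle => 0
  | .zero => 1
  | .succ => 2
  | .left => 3
  | .right => 4
  | .pair a b => Nat.pair a.encodeC b.encodeC * 4 + 5
  | .comp a b => Nat.pair a.encodeC b.encodeC * 4 + 6
  | .prec a b => Nat.pair a.encodeC b.encodeC * 4 + 7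
  | .rfind' a => a.encodeC * 4 + 8

/-- The Turing jump of (the characteristic function) `g`. -/
def JumpSet (g : ℕ → ℕ) : Set ℕ :=
  {n | ∃ c : OracleCode, ∃ m, n = Nat.pair c.encodeC m ∧ (c.evalo (toP g) m).Dom}

/-- `∅^{(n)}`: the iterated Turing jump of the empty set. -/
noncomputable def EmptyIter : ℕ → Set ℕ
  | 0 => (∅ : Set ℕ)
  | n + 1 => JumpSet (chi (EmptyIter n))

/-- The clopen set coded by the leaf label `e`: `∅`, `univ`, `[τ_m]`, or its complement. -/
def leafSet (e : ℕ) : Set (ℕ → ℕ) :=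
  if e = 0 then ∅
  else if e = 1 then Set.univ
  else if e % 2 = 0 then Cyl (Denumerable.ofNat (List ℕ) (e / 2 - 1))
  else (Cyl (Denumerable.ofNat (List ℕ) (e / 2 - 1)))ᶜ

/-- Evaluation of a normal-form Borel code of height `m` (alternating ∃/∀ over the
labelling function `f` on tuples, `true` for Σ, `false` for Π). -/
def NFEval : ℕ → Bool → (List ℕ → ℕ) → (ℕ → ℕ) → Prop
  | 0, _, f, x => x ∈ leafSet (f [])
  | m + 1, true, f, x => ∃ t, NFEval m false (fun l => f (t :: l)) x
  | m + 1, false, f, x => ∀ t, NFEval m true (fun l => f (t :: l)) x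

lemma mu_apply_eq {x : ℕ → ℕ} {i : ℕ} (h : ∃ n, x n = i) : x (mu x i) = i :=
  Nat.sInf_mem h

lemma mu_le {x : ℕ → ℕ} {i n : ℕ} (h : x n = i) : mu x i ≤ n :=
  Nat.sInf_le h

lemma mu_strictMono {p : ℕ → ℕ} (hord : IsOrderedFn p) (hsurj : Function.Surjective p) :
    StrictMono (mu p) := by
  intro j i hji
  obtain ⟨m, hm, hpm⟩ := hord (mu p i) i (mu_apply_eq (hsurj i)) j hji
  exact lt_of_le_of_lt (mu_le hpm) hm

/-- for `R = {x : f(μ^x(1)) ≤ μ^x(2)}`, homogeneity is on the `R` side. -/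
theorem stmt9 (f : ℕ → ℕ) (p : ℕ → ℕ) (hp : p ∈ OmegaPartInf)
    (hhom : Coarsenings p 3 ⊆ {x ∈ OmegaPart 3 | f (mu x 1) ≤ mu x 2} ∨
            Coarsenings p 3 ⊆ OmegaPart 3 \ {x ∈ OmegaPart 3 | f (mu x 1) ≤ mu x 2}) :
    Coarsenings p 3 ⊆ {x ∈ OmegaPart 3 | f (mu x 1) ≤ mu x 2} := by
  obtain ⟨hord, hsurj⟩ := hp
  rcases hhom with h | h
  · exact h
  · exfalso
    set u := mu p 1 with hu
    set i := max 2 (f u) with hi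
    have hi2 : 2 ≤ i := le_max_left _ _
    have hi1 : i ≠ 1 := by omega
    have hfu : f u ≤ i := le_max_right _ _
    set x : ℕ → ℕ := fun n => if p n = 1 then 1 else if p n = i then 2 else 0 with hx
    have hxlt : ∀ n, x n < 3 := by
      intro n
      simp only [hx]
      split
      · omega
      split <;> omega
    have hx1 : ∀ n, x n = 1 ↔ p n = 1 := by
      intro n
      simp only [hx]
      by_cases h1 : p n = 1 <;> simp [h1] <;> by_cases h2 : p n = i <;> simp [h1, h2]
    have hx2 : ∀ n, x n = 2 ↔ p n = i := by
      intro n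
      simp only [hx]
      by_cases h1 : p n = 1
      · have hne : p n ≠ i := by rw [h1]; omega
        simp [h1, hne]
        omega
      · by_cases h2 : p n = i <;> simp [h1, h2, hi1]
    have hx0 : ∀ n, p n = 0 → x n = 0 := by
      intro n h0
      simp only [hx, h0]
      rw [if_neg (by omega), if_neg (by omega)]
    -- x is in Coarsenings p 3
    have hmem : x ∈ Coarsenings p 3 := by
      refine ⟨⟨?_, ?_, ?_⟩, ?_⟩
      · -- ordered
        intro n j' hnj' j hj
        have hb : j' < 3 := hnj' ▸ hxlt n
        interval_cases j'
        · omega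
        · have hpn : p n = 1 := (hx1 n).mp hnj'
          obtain ⟨m, hm, hpm⟩ := hord n 1 hpn 0 (by omega)
          have hj0 : j = 0 := by omega
          exact ⟨m, hm, hj0 ▸ hx0 m hpm⟩
        · have hpn : p n = i := (hx2 n).mp hnj'
          interval_cases j
          · obtain ⟨m, hm, hpm⟩ := hord n i hpn 0 (by omega)
            exact ⟨m, hm, hx0 m hpm⟩
          · obtain ⟨m, hm, hpm⟩ := hord n i hpn 1 (by omega)
            exact ⟨m, hm, (hx1 m).mpr hpm⟩
      · exact hxlt
      · -- surjective onto 3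
        intro j hj
        interval_cases j
        · exact ⟨mu p 0, hx0 _ (mu_apply_eq (hsurj 0))⟩
        · exact ⟨u, (hx1 u).mpr (mu_apply_eq (hsurj 1))⟩
        · exact ⟨mu p i, (hx2 _).mpr (mu_apply_eq (hsurj i))⟩
      · intro n m hnm
        simp only [hx, hnm]
    -- mu x 1 = u, mu x 2 = mu p i
    have hmu1 : mu x 1 = u := by
      unfold mu
      congr 1
      ext n
      exact hx1 n
    have hmu2 : mu x 2 = mu p i := by
      unfold mu
      congr 1
      ext n
      exact hx2 n
    have hR : f (mu x 1) ≤ mu x 2 := by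
      rw [hmu1, hmu2]
      calc f u ≤ i := hfu
        _ ≤ mu p i := (mu_strictMono hord hsurj).le_apply
    have := h hmem
    exact this.2 ⟨this.1, hR⟩
end

section
/- For every Turing functional Δ, there exist computable codes R_0 and R_1 for complementary open subsets of (ω)^2 forming a reduced coloring (ω)^2 = R_0 ∪ R_1, such that Δ^{R_0 ⊕ R_1} is not an infinite partition homogeneous for this coloring. Hence no single Turing functional uniformly produces homogeneous partitions for computable clopen reduced 2-colorings of (ω)^2. -/
open Set

/-- The join `f ⊕ g` of two functions. -/
def joinFun (f g : ℕ → ℕ) : ℕ → ℕ := fun n => if n % 2 = 0 then f (n / 2) else g (n / 2)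

/-- The oracle given by a boolean code on finite strings. -/
def codeOracle (c : List ℕ → Bool) : ℕ → ℕ :=
  fun n => cond (c (Denumerable.ofNat (List ℕ) n)) 1 0

/-! ### Auxiliary material for the proof of `stmt12` -/

/-- Use principle / continuity of oracle computations: a convergent computation only
depends on finitely much of the oracle. -/
theorem evalo_use (c : OracleCode) (g : ℕ → ℕ) : ∀ (n x : ℕ),
    x ∈ c.evalo (toP g) n →
    ∃ u, ∀ g' : ℕ → ℕ, (∀ m < u, g' m = g m) → x ∈ c.evalo (toP g') n := by
  induction c with
  | oracle =>
      intro n x h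
      refine ⟨n + 1, fun g' hg' => ?_⟩
      simp only [OracleCode.evalo, toP, Part.mem_some_iff] at h ⊢
      rw [hg' n (Nat.lt_succ_self n)]; exact h
  | zero => exact fun n x h => ⟨0, fun g' _ => h⟩
  | succ => exact fun n x h => ⟨0, fun g' _ => h⟩
  | left => exact fun n x h => ⟨0, fun g' _ => h⟩
  | right => exact fun n x h => ⟨0, fun g' _ => h⟩
  | pair cf cg ihf ihg =>
      intro n x h
      simp only [OracleCode.evalo, Seq.seq, Part.bind_eq_bind, Part.mem_bind_iff,
        Part.map_eq_map, Part.mem_map_iff] at h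
      obtain ⟨fa, ⟨a, ha, rfl⟩, b, hb, rfl⟩ := h
      obtain ⟨u1, h1⟩ := ihf n a ha
      obtain ⟨u2, h2⟩ := ihg n b hb
      refine ⟨max u1 u2, fun g' hg' => ?_⟩
      simp only [OracleCode.evalo, Seq.seq, Part.bind_eq_bind, Part.mem_bind_iff,
        Part.map_eq_map, Part.mem_map_iff]
      exact ⟨Nat.pair a, ⟨a, h1 g' fun m hm => hg' m (lt_of_lt_of_le hm (le_max_left _ _)), rfl⟩,
             b, h2 g' fun m hm => hg' m (lt_of_lt_of_le hm (le_max_right _ _)), rfl⟩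
  | comp cf cg ihf ihg =>
      intro n x h
      simp only [OracleCode.evalo, Part.bind_eq_bind, Part.mem_bind_iff] at h
      obtain ⟨y, hy, hx⟩ := Part.mem_bind_iff.mp h
      obtain ⟨u1, h1⟩ := ihg n y hy
      obtain ⟨u2, h2⟩ := ihf y x hx
      refine ⟨max u1 u2, fun g' hg' => ?_⟩
      simp only [OracleCode.evalo, Part.bind_eq_bind, Part.mem_bind_iff]
      exact Part.mem_bind_iff.mpr ⟨y, h1 g' fun m hm => hg' m (lt_of_lt_of_le hm (le_max_left _ _)),
             h2 g' fun m hm => hg' m (lt_of_lt_of_le hm (le_max_right _ _))⟩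
  | prec cf cg ihf ihg =>
      intro n x h
      simp only [OracleCode.evalo, Nat.unpaired] at h ⊢
      revert x
      induction n.unpair.2 with
      | zero =>
          intro x h
          obtain ⟨u, hu⟩ := ihf _ x h
          exact ⟨u, fun g' hg' => hu g' hg'⟩
      | succ y ih =>
          intro x h
          simp only [Part.bind_eq_bind, Part.mem_bind_iff] at h
          obtain ⟨i, hi, hx⟩ := h
          obtain ⟨u1, h1⟩ := ih i hi
          obtain ⟨u2, h2⟩ := ihg _ x hx
          refine ⟨max u1 u2, fun g' hg' => ?_⟩
          simp only [Part.bind_eq_bind, Part.mem_bind_iff]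
          exact ⟨i, h1 g' fun m hm => hg' m (lt_of_lt_of_le hm (le_max_left _ _)),
                 h2 g' fun m hm => hg' m (lt_of_lt_of_le hm (le_max_right _ _))⟩
  | rfind' cf ihf =>
      intro n x h
      simp only [OracleCode.evalo, Nat.unpaired, Part.map_eq_map, Part.mem_map_iff] at h ⊢
      obtain ⟨k, hk, rfl⟩ := h
      obtain ⟨htrue, hfalse⟩ := Nat.mem_rfind.mp hk
      have H : ∀ j : ℕ, ∃ u, ∀ g' : ℕ → ℕ, (∀ m < u, g' m = g m) → ∀ b : Bool,
          b ∈ (fun x => decide (x = 0)) <$> cf.evalo (toP g) (Nat.pair n.unpair.1 (j + n.unpair.2)) →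
          b ∈ (fun x => decide (x = 0)) <$> cf.evalo (toP g') (Nat.pair n.unpair.1 (j + n.unpair.2)) := by
        intro j
        by_cases hd : ∃ v, v ∈ cf.evalo (toP g) (Nat.pair n.unpair.1 (j + n.unpair.2))
        · obtain ⟨v, hv⟩ := hd
          obtain ⟨u, hu⟩ := ihf _ v hv
          refine ⟨u, fun g' hg' b hb => ?_⟩
          simp only [Part.map_eq_map, Part.mem_map_iff] at hb ⊢
          obtain ⟨w, hw, rfl⟩ := hb
          have hwv : w = v := Part.mem_unique hw hv
          subst hwv
          exact ⟨w, hu g' hg', rfl⟩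
        · refine ⟨0, fun g' _ b hb => ?_⟩
          simp only [Part.map_eq_map, Part.mem_map_iff] at hb
          obtain ⟨w, hw, _⟩ := hb
          exact absurd ⟨w, hw⟩ hd
      choose f hf using H
      refine ⟨(Finset.range (k + 1)).sup f, fun g' hg' => ?_⟩
      refine ⟨k, Nat.mem_rfind.mpr ⟨?_, fun {j} hj => ?_⟩, rfl⟩
      · exact hf k g' (fun m hm => hg' m (lt_of_lt_of_le hm
          (Finset.le_sup (Finset.self_mem_range_succ k)))) true htrue
      · exact hf j g' (fun m hm => hg' m (lt_of_lt_of_le hm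
          (Finset.le_sup (Finset.mem_range.mpr (Nat.lt_succ_of_lt hj))))) false (hfalse hj)

/-- In an ordered function, the value `i` cannot occur before position `i`. -/
theorem ord_le {p : ℕ → ℕ} (hp : IsOrderedFn p) : ∀ i n, p n = i → i ≤ n := by
  intro i
  induction i with
  | zero => exact fun n _ => Nat.zero_le n
  | succ j ih =>
      intro n h
      obtain ⟨m, hm, hpm⟩ := hp n (j + 1) h j (Nat.lt_succ_self j)
      exact Nat.succ_le_of_lt (lt_of_le_of_lt (ih m hpm) hm)

theorem ord_zero {p : ℕ → ℕ} (hp : IsOrderedFn p) : p 0 = 0 :=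
  Nat.le_zero.mp (ord_le hp (p 0) 0 rfl)

theorem restrict_length (x : ℕ → ℕ) (L : ℕ) : (restrictList x L).length = L := by
  simp [restrictList]

theorem restrict_getD {x : ℕ → ℕ} {n L : ℕ} (h : n < L) :
    (restrictList x L).getD n 0 = x n := by
  rw [restrictList, List.getD_eq_getElem?_getD]
  simp [List.getElem?_map, List.getElem?_range h]

theorem idx_of_spec : ∀ (σ : List ℕ) (n : ℕ), n < σ.length → σ.getD n 0 = 1 →
    (∀ m < n, σ.getD m 0 ≠ 1) → σ.idxOf 1 = n := by
  intro σ
  induction σ with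
  | nil => intro n hn; simp at hn
  | cons a l ih =>
      intro n hn h1 h0
      cases n with
      | zero =>
          simp only [List.getD_cons_zero] at h1
          simp [List.idxOf_cons, h1]
      | succ n' =>
          have ha : a ≠ 1 := by
            have := h0 0 (Nat.succ_pos n')
            simpa using this
          have hn' : n' < l.length := by simpa using hn
          have h1' : l.getD n' 0 = 1 := by simpa using h1
          have h0' : ∀ m < n', l.getD m 0 ≠ 1 := by
            intro m hm
            have := h0 (m + 1) (Nat.succ_lt_succ hm)
            simpa using this
          simp [List.idxOf_cons, ha, ih n' hn' h1' h0']

theorem idx_mem_spec : ∀ (σ : List ℕ), σ.idxOf 1 < σ.length →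
    σ.getD (σ.idxOf 1) 0 = 1 ∧ ∀ m < σ.idxOf 1, σ.getD m 0 ≠ 1 := by
  intro σ
  induction σ with
  | nil => intro h; simp at h
  | cons a l ih =>
      intro h
      by_cases ha : a = 1
      · subst ha
        simp [List.idxOf_cons]
      · rw [List.idxOf_cons] at h ⊢
        have hbeq : (a == 1) = false := beq_false_of_ne ha
        rw [hbeq] at h ⊢
        simp only [cond_false] at h ⊢
        have hlt : l.idxOf 1 < l.length := by simpa using h
        obtain ⟨hget, hmin⟩ := ih hlt
        refine ⟨by simpa using hget, ?_⟩
        intro m hm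
        cases m with
        | zero => simpa using ha
        | succ m' =>
            have : m' < l.idxOf 1 := by omega
            simpa using hmin m' this

/-- Membership in the open set coded by an `idxOf`-based coloring, for sequences
containing a `1`, is determined by `μ^x(1)`. -/
theorem mem_open_idx {c : List ℕ → Bool} {Q : ℕ → Prop}
    (hc : ∀ σ, c σ = true ↔ (σ.idxOf 1 < σ.length ∧ Q (σ.idxOf 1)))
    {x : ℕ → ℕ} (hx1 : ∃ n, x n = 1) :
    x ∈ OpenFrom {σ | c σ = true} ↔ Q (mu x 1) := by
  have hne : {n | x n = 1}.Nonempty := hx1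
  have hmem : x (mu x 1) = 1 := Nat.sInf_mem hne
  have hmin : ∀ m < mu x 1, x m ≠ 1 := by
    intro m hm
    have h2 : m ∉ {n | x n = 1} :=
      Nat.notMem_of_lt_sInf (show m < sInf {n | x n = 1} from hm)
    exact h2
  constructor
  · rintro ⟨σ, hσ, hcyl⟩
    rw [Set.mem_setOf_eq, hc σ] at hσ
    obtain ⟨hlen, hQ⟩ := hσ
    obtain ⟨hget, hminσ⟩ := idx_mem_spec σ hlen
    have hx : x (σ.idxOf 1) = 1 := by rw [hcyl _ hlen]; exact hget
    have hxm : ∀ m < σ.idxOf 1, x m ≠ 1 := by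
      intro m hm
      rw [hcyl _ (lt_trans hm hlen)]
      exact hminσ m hm
    have : σ.idxOf 1 = mu x 1 := by
      have h1 : mu x 1 ≤ σ.idxOf 1 := Nat.sInf_le hx
      rcases lt_or_eq_of_le h1 with h | h
      · exact absurd hmem (hxm _ h)
      · exact h.symm
    rwa [this] at hQ
  · intro hQ
    refine ⟨restrictList x (mu x 1 + 1), ?_, ?_⟩
    · rw [Set.mem_setOf_eq, hc]
      have hidx : (restrictList x (mu x 1 + 1)).idxOf 1 = mu x 1 := by
        refine idx_of_spec _ (mu x 1) ?_ ?_ ?_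
        · rw [restrict_length]; exact Nat.lt_succ_self _
        · rw [restrict_getD (Nat.lt_succ_self _)]; exact hmem
        · intro m hm
          rw [restrict_getD (lt_trans hm (Nat.lt_succ_self _))]
          exact hmin m hm
      rw [hidx, restrict_length]
      exact ⟨Nat.lt_succ_self _, hQ⟩
    · intro n hn
      rw [restrict_length] at hn
      exact (restrict_getD hn).symm

/-- The all-color-1 coloring. -/
def cW0 : List ℕ → Bool := fun _ => false
def cW1 : List ℕ → Bool := fun σ => decide (σ.idxOf 1 < σ.length ∧ 0 ≤ σ.idxOf 1)

/-- The threshold coloring: `μ`-values `< t` get color 1, values `≥ t` get color 0. -/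
def cV0 (t : ℕ) : List ℕ → Bool := fun σ => decide (σ.idxOf 1 < σ.length ∧ t ≤ σ.idxOf 1)
def cV1 (t : ℕ) : List ℕ → Bool := fun σ => decide (σ.idxOf 1 < σ.length ∧ σ.idxOf 1 < t)

theorem primrec_idx : Primrec fun σ : List ℕ => σ.idxOf 1 :=
  Primrec.list_idxOf.comp (Primrec.const 1) Primrec.id

theorem primrec_idx_lt_len : PrimrecPred fun σ : List ℕ => σ.idxOf 1 < σ.length :=
  Primrec.nat_lt.comp primrec_idx Primrec.list_length

theorem computable_cW0 : Computable cW0 := (Primrec.const false).to_comp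

theorem computable_cW1 : Computable cW1 := by
  have h := primrec_idx_lt_len.and (Primrec.nat_le.comp (Primrec.const 0) primrec_idx)
  exact Primrec.to_comp (Primrec.of_eq h.decide fun σ => decide_eq_decide.mpr Iff.rfl)

theorem computable_cV0 (t : ℕ) : Computable (cV0 t) := by
  have h := primrec_idx_lt_len.and (Primrec.nat_le.comp (Primrec.const t) primrec_idx)
  exact Primrec.to_comp (Primrec.of_eq h.decide fun σ => decide_eq_decide.mpr Iff.rfl)

theorem computable_cV1 (t : ℕ) : Computable (cV1 t) := by
  have h := primrec_idx_lt_len.and (Primrec.nat_lt.comp primrec_idx (Primrec.const t))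
  exact Primrec.to_comp (Primrec.of_eq h.decide fun σ => decide_eq_decide.mpr Iff.rfl)

/-- `μ^p(i) ≥ i` for ordered functions. -/
theorem mu_ge {p : ℕ → ℕ} (hp : IsOrderedFn p) {i : ℕ} (hocc : ∃ n, p n = i) :
    i ≤ mu p i :=
  ord_le hp i _ (Nat.sInf_mem hocc)

/-- The 2-valued indicator of the block of value `i` is a 2-coarsening. -/
theorem indicator_coarsening {p : ℕ → ℕ} (hp : p ∈ OmegaPartInf) {i : ℕ} (hi : 1 ≤ i) :
    (fun n => if p n = i then 1 else 0) ∈ Coarsenings p 2 ∧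
      mu (fun n => if p n = i then 1 else 0) 1 = mu p i := by
  obtain ⟨hord, hsurj⟩ := hp
  have hocc : ∃ n, p n = i := hsurj i
  have hp0 : p 0 = 0 := ord_zero hord
  have hq0 : (if p 0 = i then 1 else 0) = 0 := by
    rw [hp0, if_neg (by omega : ¬(0 = i))]
  constructor
  · refine ⟨⟨?_, ?_, ?_⟩, ?_⟩
    · intro n j hj j' hj'
      simp only at hj
      by_cases hpn : p n = i
      · rw [if_pos hpn] at hj
        have hj'0 : j' = 0 := by omega
        subst hj'0
        have hn : 1 ≤ n := le_trans hi (ord_le hord i n hpn)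
        exact ⟨0, by omega, hq0⟩
      · rw [if_neg hpn] at hj
        exact absurd hj' (by omega)
    · intro n; by_cases hpn : p n = i <;> simp [hpn]
    · intro j hj
      interval_cases j
      · exact ⟨0, hq0⟩
      · refine ⟨mu p i, ?_⟩
        show (if p (mu p i) = i then 1 else 0) = 1
        rw [if_pos (show p (mu p i) = i from Nat.sInf_mem hocc)]
    · intro n m hnm
      show (if p n = i then 1 else 0) = (if p m = i then 1 else 0)
      rw [hnm]
  · have : {n | (if p n = i then 1 else 0) = 1} = {n | p n = i} := by
      ext n; by_cases hpn : p n = i <;> simp [hpn]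
    rw [mu, mu, this]

/-- no Turing functional uniformly solves computable clopen reduced
2-colorings of `(ω)^2`. -/
theorem stmt12 (Δ : OracleCode) :
    ∃ c0 c1 : List ℕ → Bool, Computable c0 ∧ Computable c1 ∧
      -- the coded open sets are complementary on (ω)^2
      (∀ x ∈ OmegaPart 2,
        (x ∈ OpenFrom {σ | c0 σ = true} ↔ x ∉ OpenFrom {σ | c1 σ = true})) ∧
      -- the coloring is reduced: the color depends only on μ^x(1)
      (∀ x ∈ OmegaPart 2, ∀ y ∈ OmegaPart 2, mu x 1 = mu y 1 →
        (x ∈ OpenFrom {σ | c0 σ = true} ↔ y ∈ OpenFrom {σ | c0 σ = true})) ∧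
      -- Δ^{R0 ⊕ R1} is not an infinite homogeneous partition
      ¬ ∃ p : ℕ → ℕ,
          Δ.evalo (toP (joinFun (codeOracle c0) (codeOracle c1))) = toP p ∧
          p ∈ OmegaPartInf ∧
          (Coarsenings p 2 ⊆ OpenFrom {σ | c0 σ = true} ∨
           Coarsenings p 2 ⊆ OpenFrom {σ | c1 σ = true}) := by
  classical
  by_cases hW : ∃ p : ℕ → ℕ,
      Δ.evalo (toP (joinFun (codeOracle cW0) (codeOracle cW1))) = toP p ∧
      p ∈ OmegaPartInf ∧
      (Coarsenings p 2 ⊆ OpenFrom {σ | cW0 σ = true} ∨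
       Coarsenings p 2 ⊆ OpenFrom {σ | cW1 σ = true})
  case neg =>
    refine ⟨cW0, cW1, computable_cW0, computable_cW1, ?_, ?_, hW⟩
    · intro x hx
      have hx1 : ∃ n, x n = 1 := hx.2.2 1 one_lt_two
      have h1 : x ∈ OpenFrom {σ | cW1 σ = true} :=
        (mem_open_idx (Q := fun i => 0 ≤ i) (fun σ => by simp [cW1]) hx1).mpr (Nat.zero_le _)
      have h0 : x ∉ OpenFrom {σ | cW0 σ = true} := by
        rintro ⟨σ, hσ, -⟩
        simp [cW0] at hσ
      exact iff_of_false h0 (not_not_intro h1)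
    · intro x hx y hy _
      have h0x : x ∉ OpenFrom {σ | cW0 σ = true} := by
        rintro ⟨σ, hσ, -⟩; simp [cW0] at hσ
      have h0y : y ∉ OpenFrom {σ | cW0 σ = true} := by
        rintro ⟨σ, hσ, -⟩; simp [cW0] at hσ
      exact iff_of_false h0x h0y
  case pos =>
    obtain ⟨p0, hΔ0, hp0, -⟩ := hW
    have hex1 : ∃ n, p0 n = 1 := hp0.2 1
    have hp0n1 : p0 (mu p0 1) = 1 := Nat.sInf_mem (show {n | p0 n = 1}.Nonempty from hex1)
    have hp0lt : ∀ k < mu p0 1, p0 k ≠ 1 := by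
      intro k hk
      have h2 : k ∉ {n | p0 n = 1} :=
        Nat.notMem_of_lt_sInf (show k < sInf {n | p0 n = 1} from hk)
      exact h2
    set n1 := mu p0 1 with hn1
    have huse : ∀ k : ℕ, ∃ u, ∀ g' : ℕ → ℕ,
        (∀ m < u, g' m = joinFun (codeOracle cW0) (codeOracle cW1) m) →
        p0 k ∈ Δ.evalo (toP g') k := by
      intro k
      refine evalo_use Δ _ k (p0 k) ?_
      rw [hΔ0]
      exact Part.mem_some _
    choose f hf using huse
    set u := (Finset.range (n1 + 1)).sup f with hu
    set T := (Finset.range u).sup (fun m => (Denumerable.ofNat (List ℕ) (m / 2)).length) with hT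
    set t := max (n1 + 1) (T + 1) with ht
    have htT : T < t := lt_of_lt_of_le (Nat.lt_succ_self T) (le_max_right _ _)
    have htn1 : n1 < t := lt_of_lt_of_le (Nat.lt_succ_self n1) (le_max_left _ _)
    have ht1 : 1 ≤ t := le_trans (Nat.succ_le_succ (Nat.zero_le n1)) (le_max_left _ _)
    refine ⟨cV0 t, cV1 t, computable_cV0 t, computable_cV1 t, ?_, ?_, ?_⟩
    · -- complementary
      intro x hx
      have hx1 : ∃ n, x n = 1 := hx.2.2 1 one_lt_two
      rw [mem_open_idx (Q := fun i => t ≤ i) (fun σ => by simp [cV0]) hx1,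
        mem_open_idx (Q := fun i => i < t) (fun σ => by simp [cV1]) hx1]
      exact not_lt.symm
    · -- reduced
      intro x hx y hy hmu
      have hx1 : ∃ n, x n = 1 := hx.2.2 1 one_lt_two
      have hy1 : ∃ n, y n = 1 := hy.2.2 1 one_lt_two
      rw [mem_open_idx (Q := fun i => t ≤ i) (fun σ => by simp [cV0]) hx1,
        mem_open_idx (Q := fun i => t ≤ i) (fun σ => by simp [cV0]) hy1, hmu]
    · -- not solved by Δ
      rintro ⟨p', hΔ', hp', hhom⟩
      have hagree : ∀ m < u, joinFun (codeOracle (cV0 t)) (codeOracle (cV1 t)) m =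
          joinFun (codeOracle cW0) (codeOracle cW1) m := by
        intro m hm
        have hlen : (Denumerable.ofNat (List ℕ) (m / 2)).length ≤ T :=
          Finset.le_sup (f := fun m => (Denumerable.ofNat (List ℕ) (m / 2)).length)
            (Finset.mem_range.mpr hm)
        unfold joinFun codeOracle
        by_cases hm2 : m % 2 = 0
        · rw [if_pos hm2, if_pos hm2]
          have h0 : cV0 t (Denumerable.ofNat (List ℕ) (m / 2)) = false := by
            simp only [cV0, decide_eq_false_iff_not]
            rintro ⟨h1, h2⟩
            have h3 : (Denumerable.ofNat (List ℕ) (m / 2)).idxOf 1 < t :=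
              lt_trans (lt_of_lt_of_le h1 hlen) htT
            omega
          rw [h0]
          rfl
        · rw [if_neg hm2, if_neg hm2]
          have h01 : cV1 t (Denumerable.ofNat (List ℕ) (m / 2)) =
              cW1 (Denumerable.ofNat (List ℕ) (m / 2)) := by
            simp only [cV1, cW1]
            rw [decide_eq_decide]
            constructor
            · rintro ⟨h1, -⟩
              exact ⟨h1, Nat.zero_le _⟩
            · rintro ⟨h1, -⟩
              exact ⟨h1, lt_trans (lt_of_lt_of_le h1 hlen) htT⟩
          rw [h01]
      have hpk : ∀ k ≤ n1, p' k = p0 k := by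
        intro k hk
        have hfk : f k ≤ u := Finset.le_sup (Finset.mem_range.mpr (Nat.lt_succ_of_le hk))
        have h1 : p0 k ∈ Δ.evalo (toP (joinFun (codeOracle (cV0 t)) (codeOracle (cV1 t)))) k :=
          hf k _ (fun m hm => hagree m (lt_of_lt_of_le hm hfk))
        rw [hΔ'] at h1
        exact (Part.mem_some_iff.mp h1).symm
      have hmem1 : p' n1 = 1 := by rw [hpk n1 le_rfl]; exact hp0n1
      have hmu1 : mu p' 1 = n1 := by
        have hle : mu p' 1 ≤ n1 := Nat.sInf_le (show n1 ∈ {n | p' n = 1} from hmem1)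
        rcases lt_or_eq_of_le hle with h | h
        · have hlt' : p' (mu p' 1) = 1 :=
            Nat.sInf_mem (show {n | p' n = 1}.Nonempty from ⟨n1, hmem1⟩)
          rw [hpk _ (le_of_lt h)] at hlt'
          exact absurd hlt' (hp0lt (mu p' 1) h)
        · exact h
      obtain ⟨hq1c, hq1mu⟩ := indicator_coarsening (i := 1) hp' le_rfl
      obtain ⟨hq2c, hq2mu⟩ := indicator_coarsening (i := t) hp' ht1
      cases hhom with
      | inl h0 =>
          have hq1R := h0 hq1c
          have hq1_1 : ∃ n, (fun n => if p' n = 1 then 1 else 0) n = 1 :=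
            hq1c.1.2.2 1 one_lt_two
          rw [mem_open_idx (Q := fun i => t ≤ i) (fun σ => by simp [cV0]) hq1_1] at hq1R
          rw [hq1mu, hmu1] at hq1R
          omega
      | inr h1 =>
          have hq2R := h1 hq2c
          have hq2_1 : ∃ n, (fun n => if p' n = t then 1 else 0) n = 1 :=
            hq2c.1.2.2 1 one_lt_two
          rw [mem_open_idx (Q := fun i => i < t) (fun σ => by simp [cV1]) hq2_1] at hq2R
          rw [hq2mu] at hq2R
          have hge := mu_ge hp'.1 (hp'.2 t)
          omega
end
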